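/- arXiv:2604.27501 — 6 statements merged into one kernel-verified Lean document; each statement's English description precedes it below -/
import Mathlib

section
/- Let F_q be a finite field of odd characteristic with q elements, let 0 < δ < 3/4, and let C > 0. Suppose that for all functions f₁, f₂ : F_q → ℂ one has ‖𝒜(f₁,f₂) − E[f₁]·E[f₂]‖₂ ≤ C·q^{−δ}·‖f₁‖₂·‖f₂‖₂. Then there exists a constant C' > 0 (depending only on C and δ) such that every subset A ⊆ F_q with |A| ≥ C'·q^{1−(2/3)δ} contains a nontrivial quadratic progression, i.e. there exist x ∈ F_q and y ≠ 0 with x, x+y, x+y² ∈ A. -/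
set_option maxHeartbeats 1000000

open Finset

/-- The normalized average `E[f] = (1/q) ∑_x f(x)`. -/
noncomputable def expect {F : Type} [Fintype F] (f : F → ℂ) : ℂ :=
  (∑ x, f x) / (Fintype.card F : ℂ)

/-- The normalized `L²` norm `‖f‖₂ = ((1/q) ∑_x |f(x)|²)^{1/2}`. -/
noncomputable def norm2 {F : Type} [Fintype F] (f : F → ℂ) : ℝ :=
  Real.sqrt ((∑ x, ‖f x‖ ^ 2) / (Fintype.card F : ℝ))

/-- The bilinear averaging operator `𝒜(f₁,f₂)(x) = (1/q) ∑_y f₁(x+y) f₂(x+y²)`. -/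
noncomputable def bilinAvg {F : Type} [Field F] [Fintype F] (f₁ f₂ : F → ℂ) (x : F) : ℂ :=
  (∑ y, f₁ (x + y) * f₂ (x + y ^ 2)) / (Fintype.card F : ℂ)

/-- If the bilinear estimate holds with factor `q^{-δ}` (`0 < δ < 3/4`),
then there is `C'` (depending only on `C` and `δ`) such that every `A` with
`|A| ≥ C'·q^{1-(2/3)δ}` contains a nontrivial quadratic progression. -/
theorem statement2 (δ C : ℝ) (hδ₀ : 0 < δ) (hδ : δ < 3 / 4) (hC : 0 < C) :
    ∃ C' : ℝ, 0 < C' ∧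
      ∀ (F : Type) [Field F] [Fintype F], ringChar F ≠ 2 →
        (∀ f₁ f₂ : F → ℂ,
            norm2 (fun x => bilinAvg f₁ f₂ x - expect f₁ * expect f₂) ≤
              C * (Fintype.card F : ℝ) ^ (-δ) * norm2 f₁ * norm2 f₂) →
        ∀ A : Finset F,
          C' * (Fintype.card F : ℝ) ^ (1 - (2 / 3) * δ) ≤ (A.card : ℝ) →
          ∃ x y : F, y ≠ 0 ∧ x ∈ A ∧ x + y ∈ A ∧ x + y ^ 2 ∈ A := by
  refine ⟨(2 * C) ^ ((2 : ℝ) / 3) + 2, by positivity, ?_⟩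
  intro F _ _ _hchar hyp A hA
  set q : ℝ := (Fintype.card F : ℝ) with hqdef
  have hq2 : (2 : ℝ) ≤ q := by
    have h : 2 ≤ Fintype.card F := Fintype.one_lt_card
    rw [hqdef]; exact_mod_cast h
  have hq0 : (0 : ℝ) < q := by linarith
  have hq1 : (1 : ℝ) ≤ q := by linarith
  set a : ℝ := (A.card : ℝ) with hadef
  have hCpow : (0 : ℝ) ≤ (2 * C) ^ ((2 : ℝ) / 3) := by positivity
  have hqpow : (0 : ℝ) < q ^ (1 - 2 / 3 * δ) := Real.rpow_pos_of_pos hq0 _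
  have ha2 : 2 * q ^ (1 - 2 / 3 * δ) ≤ a := by nlinarith [hA]
  have haC : (2 * C) ^ ((2 : ℝ) / 3) * q ^ (1 - 2 / 3 * δ) ≤ a := by nlinarith [hA]
  have ha0 : (0 : ℝ) < a := lt_of_lt_of_le (by positivity) ha2
  classical
  set f : F → ℂ := fun x => if x ∈ A then 1 else 0 with hfdef
  -- basic computations
  have hsumf : (∑ x, f x) = (a : ℂ) := by
    simp [hfdef, Finset.sum_ite_mem, hadef]
  have hexp : _root_.expect f = (a : ℂ) / (q : ℂ) := by
    rw [_root_.expect, hsumf]; norm_cast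
  have habsf : (∑ x, ‖f x‖ ^ 2) = a := by
    have h : ∀ x, ‖f x‖ ^ 2 = if x ∈ A then (1:ℝ) else 0 := fun x => by
      by_cases h : x ∈ A <;> simp [hfdef, h]
    simp_rw [h]
    rw [Finset.sum_ite_mem, Finset.univ_inter, Finset.sum_const, hadef]
    simp
  have hnf : norm2 f = Real.sqrt (a / q) := by rw [norm2, habsf]
  -- the counting set
  set T : Finset (F × F) :=
    Finset.univ.filter (fun p : F × F => p.1 ∈ A ∧ p.1 + p.2 ∈ A ∧ p.1 + p.2 ^ 2 ∈ A) with hTdef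
  set N : ℝ := (T.card : ℝ) with hNdef
  have hN0 : 0 ≤ N := by positivity
  -- key identity
  have hkey : (∑ x : F, f x * ∑ y : F, f (x + y) * f (x + y ^ 2)) = (N : ℂ) := by
    have : T.card = ∑ p : F × F, if p.1 ∈ A ∧ p.1 + p.2 ∈ A ∧ p.1 + p.2 ^ 2 ∈ A then 1 else 0 := by
      rw [hTdef]; exact Finset.card_filter _ _
    rw [hNdef, this]
    push_cast
    simp only [Finset.mul_sum]
    rw [← Fintype.sum_prod_type']
    refine Finset.sum_congr rfl fun p _ => ?_
    by_cases h1 : p.1 ∈ A <;> by_cases h2 : p.1 + p.2 ∈ A <;>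
      by_cases h3 : p.1 + p.2 ^ 2 ∈ A <;> simp [hfdef, h1, h2, h3]
  -- express the correlation sum
  set g : F → ℂ := fun x => bilinAvg f f x - _root_.expect f * _root_.expect f with hgdef
  have hqC : ((Fintype.card F : ℕ) : ℂ) = ((q : ℝ) : ℂ) := by
    rw [hqdef]; push_cast; rfl
  have hq0' : (q : ℂ) ≠ 0 := by
    exact_mod_cast hq0.ne'
  have hsum_bilin : (∑ x : F, f x * bilinAvg f f x) = (N : ℂ) / (q : ℂ) := by
    rw [← hkey]
    rw [Finset.sum_div]
    refine Finset.sum_congr rfl fun x _ => ?_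
    rw [bilinAvg, hqC, mul_div_assoc]
  have hsum_g : (∑ x : F, f x * g x) = (N : ℂ) / (q : ℂ) - (a : ℂ) ^ 3 / (q : ℂ) ^ 2 := by
    simp only [hgdef, mul_sub]
    rw [Finset.sum_sub_distrib, hsum_bilin, ← Finset.sum_mul, hsumf, hexp]
    ring
  -- bound |∑ f g| by Cauchy-Schwarz
  set G : ℝ := ∑ x, ‖g x‖ ^ 2 with hGdef
  have hG0 : 0 ≤ G := by positivity
  have hCS : ‖∑ x : F, f x * g x‖ ≤ Real.sqrt a * Real.sqrt G := by
    calc ‖∑ x : F, f x * g x‖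
        ≤ ∑ x : F, ‖f x‖ * ‖g x‖ := by
          refine le_trans (norm_sum_le _ _) ?_
          exact le_of_eq (Finset.sum_congr rfl fun x _ => norm_mul _ _)
      _ ≤ Real.sqrt a * Real.sqrt G := by
          have h1 : (∑ x : F, ‖f x‖ * ‖g x‖) ^ 2 ≤
              (∑ x, ‖f x‖ ^ 2) * ∑ x, ‖g x‖ ^ 2 :=
            Finset.sum_mul_sq_le_sq_mul_sq _ _ _
          rw [habsf, ← hGdef] at h1
          have h2 : (0 : ℝ) ≤ ∑ x : F, ‖f x‖ * ‖g x‖ := by positivity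
          calc (∑ x : F, ‖f x‖ * ‖g x‖)
              = Real.sqrt ((∑ x : F, ‖f x‖ * ‖g x‖) ^ 2) :=
                (Real.sqrt_sq h2).symm
            _ ≤ Real.sqrt (a * G) := Real.sqrt_le_sqrt h1
            _ = Real.sqrt a * Real.sqrt G := Real.sqrt_mul (le_of_lt ha0) _
  -- bound G using hypothesis
  have hRbound : norm2 g ≤ C * q ^ (-δ) * (a / q) := by
    have := hyp f f
    rw [hnf] at this
    calc norm2 g ≤ C * q ^ (-δ) * Real.sqrt (a / q) * Real.sqrt (a / q) := this
      _ = C * q ^ (-δ) * (a / q) := by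
          rw [mul_assoc, Real.mul_self_sqrt (by positivity)]
  have hn2g : norm2 g = Real.sqrt (G / q) := by rw [norm2, hGdef, hqdef]
  clear_value f g G T N q a
  clear hyp hkey hsum_bilin hsumf hexp habsf hnf hqC hq0'
  have hGb : G ≤ q * (C * q ^ (-δ) * (a / q)) ^ 2 := by
    have h1 : Real.sqrt (G / q) ≤ C * q ^ (-δ) * (a / q) := hn2g ▸ hRbound
    have h2 : G / q ≤ (C * q ^ (-δ) * (a / q)) ^ 2 := by
      have := Real.sq_sqrt (by positivity : (0:ℝ) ≤ G / q)
      nlinarith [Real.sqrt_nonneg (G / q)]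
    calc G = q * (G / q) := by field_simp
      _ ≤ q * (C * q ^ (-δ) * (a / q)) ^ 2 := by
          exact mul_le_mul_of_nonneg_left h2 (le_of_lt hq0)
  have hsqrtG : Real.sqrt G ≤ Real.sqrt q * (C * q ^ (-δ) * (a / q)) := by
    have h0 : (0:ℝ) ≤ C * q ^ (-δ) * (a / q) := by positivity
    calc Real.sqrt G ≤ Real.sqrt (q * (C * q ^ (-δ) * (a / q)) ^ 2) := Real.sqrt_le_sqrt hGb
      _ = Real.sqrt q * (C * q ^ (-δ) * (a / q)) := by
          rw [Real.sqrt_mul (le_of_lt hq0), Real.sqrt_sq h0]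
  -- real-part lower bound on N
  have hre : N / q - a ^ 3 / q ^ 2 = (∑ x : F, f x * g x).re := by
    rw [hsum_g]
    have : ((N : ℝ) : ℂ) / ((q:ℝ) : ℂ) - ((a:ℝ) : ℂ) ^ 3 / ((q:ℝ) : ℂ) ^ 2
        = (((N / q - a ^ 3 / q ^ 2 : ℝ)) : ℂ) := by push_cast; ring
    rw [this, Complex.ofReal_re]
  have habs_re : |N / q - a ^ 3 / q ^ 2| ≤ Real.sqrt a * Real.sqrt G := by
    rw [hre]
    exact le_trans (Complex.abs_re_le_norm _) hCS
  set B : ℝ := C * a * Real.sqrt a * Real.sqrt q * q ^ (-δ) / q with hBdef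
  have hBound : N / q - a ^ 3 / q ^ 2 ≥ -B := by
    have h1 : Real.sqrt a * Real.sqrt G ≤ B := by
      have := mul_le_mul_of_nonneg_left hsqrtG (Real.sqrt_nonneg a)
      refine le_trans this (le_of_eq ?_)
      rw [hBdef]; ring
    have h2 := abs_le.mp habs_re
    linarith [h2.1]
  -- N ≥ a^3/q − q·B
  have hNlower : a ^ 3 / q - q * B ≤ N := by
    have := hBound
    have h := mul_le_mul_of_nonneg_left (by linarith : N / q ≥ a ^ 3 / q ^ 2 - B) (le_of_lt hq0)
    have hfin : q * (a ^ 3 / q ^ 2 - B) ≤ q * (N / q) := by linarith [h]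
    have e1 : q * (N / q) = N := by field_simp
    have e2 : q * (a ^ 3 / q ^ 2 - B) = a ^ 3 / q - q * B := by field_simp
    linarith [e1 ▸ e2 ▸ hfin]
  -- arithmetic: key rpow estimates.  Let s = √a, r = √q.
  set s : ℝ := Real.sqrt a with hsdef
  set r : ℝ := Real.sqrt q with hrdef
  have hs0 : 0 < s := Real.sqrt_pos.mpr ha0
  have hr0 : 0 < r := Real.sqrt_pos.mpr hq0
  have hs2 : s ^ 2 = a := Real.sq_sqrt (le_of_lt ha0)
  have hr2 : r ^ 2 = q := Real.sq_sqrt (le_of_lt hq0)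
  set t : ℝ := q ^ (-δ) with htdef
  have ht0 : 0 < t := Real.rpow_pos_of_pos hq0 _
  -- claim 1 : a^{3/2} ≥ 2C q^{3/2 - δ},  i.e.  s^3 ≥ 2C r^3 t
  have hclaim1 : 2 * C * r ^ 3 * t ≤ s ^ 3 := by
    have h1 : ((2 * C) ^ ((2:ℝ)/3) * q ^ (1 - 2/3*δ)) ^ ((3:ℝ)/2) ≤ a ^ ((3:ℝ)/2) :=
      Real.rpow_le_rpow (by positivity) haC (by norm_num)
    have h2 : ((2 * C) ^ ((2:ℝ)/3) * q ^ (1 - 2/3*δ)) ^ ((3:ℝ)/2)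
        = (2 * C) * q ^ ((3:ℝ)/2 - δ) := by
      rw [Real.mul_rpow (by positivity) (by positivity),
        ← Real.rpow_mul (by positivity : (0:ℝ) ≤ 2*C),
        ← Real.rpow_mul hq0.le,
        show ((2:ℝ)/3) * ((3:ℝ)/2) = 1 by ring,
        show (1 - 2/3*δ) * ((3:ℝ)/2) = (3:ℝ)/2 - δ by ring,
        Real.rpow_one]
    have hs3 : a ^ ((3:ℝ)/2) = s ^ 3 := by
      rw [hsdef, Real.sqrt_eq_rpow, ← Real.rpow_natCast (a ^ ((1:ℝ)/2)) 3,
        ← Real.rpow_mul ha0.le]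
      norm_num
    have hr3 : q ^ ((3:ℝ)/2 - δ) = r ^ 3 * t := by
      rw [hrdef, htdef, Real.sqrt_eq_rpow, ← Real.rpow_natCast (q ^ ((1:ℝ)/2)) 3,
        ← Real.rpow_mul hq0.le, ← Real.rpow_add hq0]
      norm_num
      rw [sub_eq_add_neg]
    rw [h2, hr3] at h1
    rw [hs3] at h1
    linarith [h1]
  -- claim 2 : a ≥ 2 r
  have har : 2 * r ≤ a := by
    have hexp_le : q ^ ((1:ℝ)/2) ≤ q ^ (1 - 2/3*δ) :=
      Real.rpow_le_rpow_of_exponent_le hq1 (by linarith)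
    have hrq : r = q ^ ((1:ℝ)/2) := by rw [hrdef, Real.sqrt_eq_rpow]
    rw [hrq]
    linarith [ha2, hexp_le]
  -- combine: q·B ≤ a³/(2q)
  have hqB : q * B = C * s ^ 3 * r * t := by
    rw [hBdef, mul_comm q, div_mul_cancel₀ _ hq0.ne', ← hs2]
    ring
  have hqBle : q * B ≤ a ^ 3 / (2 * q) := by
    rw [hqB, show a ^ 3 / (2 * q) = s ^ 6 / (2 * r ^ 2) from by rw [← hs2, ← hr2]; ring,
      le_div_iff₀ (by positivity)]
    nlinarith [mul_le_mul_of_nonneg_left hclaim1 (pow_nonneg hs0.le 3)]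
  have hfin2 : a < a ^ 3 / (2 * q) := by
    rw [lt_div_iff₀ (by positivity)]
    nlinarith [mul_le_mul har har (by positivity) ha0.le, hr2, mul_pos ha0 hq0]
  have haN : a < N := by
    have hsplit : a ^ 3 / q = a ^ 3 / (2 * q) + a ^ 3 / (2 * q) := by
      field_simp; ring
    linarith [hNlower, hqBle, hfin2]
  -- conclude: more solutions than trivial ones
  have hcard : A.card < T.card := by
    rw [hadef, hNdef] at haN; exact_mod_cast haN
  by_contra hcon
  push_neg at hcon
  have hy0 : ∀ p ∈ T, p.2 = 0 := by
    intro p hp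
    rw [hTdef, Finset.mem_filter] at hp
    by_contra hne
    exact hcon p.1 p.2 hne hp.2.1 hp.2.2.1 hp.2.2.2
  have hle : T.card ≤ A.card := by
    apply Finset.card_le_card_of_injOn (fun p => p.1)
    · intro p hp
      rw [Finset.mem_coe, hTdef, Finset.mem_filter] at hp
      exact hp.2.1
    · intro p hp p' hp' h
      exact Prod.ext h ((hy0 p hp).trans (hy0 p' hp').symm)
  omega
end

section
/- Let F_q be a finite field of odd characteristic with q elements, let e : F_q → ℂ be a nontrivial additive character, and let h ∈ F_q with h ≠ 0. For y, z ∈ F_q with y ∉ {0, −h} and z ∉ {0, −h}, define B_h(y,z) = ∑_{x ∈ F_q} e(−x²/y + (x−h)²/(y+h) + x²/z − (x−h)²/(z+h)). Then: (i) B_h(y,y) = q for every admissible y; (ii) if y ≠ z and h + y + z = 0, then B_h(y,z) = 0; (iii) if y ≠ z and h + y + z ≠ 0, then |B_h(y,z)| = q^{1/2}. -/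
open Finset

lemma sum_shift_zero {F : Type} [Field F] [Fintype F] (e : AddChar F ℂ) (he : e ≠ 1)
    {b : F} (hb : b ≠ 0) : ∑ x : F, e (b * x) = 0 := by
  have h1 : AddChar.mulShift e b ≠ 1 := AddChar.IsPrimitive.of_ne_one he hb
  have h2 : ∑ x : F, (AddChar.mulShift e b) x = 0 :=
    AddChar.sum_eq_zero_iff_ne_zero.mpr h1
  simpa using h2

lemma quad_abs {F : Type} [Field F] [Fintype F] (hchar : ringChar F ≠ 2)
    (e : AddChar F ℂ) (he : e ≠ 1) (a b c : F) (ha : a ≠ 0) :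
    ‖∑ x : F, e (a * x ^ 2 + b * x + c)‖ = Real.sqrt (Fintype.card F) := by
  have h2 : (2 : F) ≠ 0 := Ring.two_ne_zero hchar
  set S := ∑ x : F, e (a * x ^ 2 + b * x + c) with hS
  have key : S * (starRingEnd ℂ) S = (Fintype.card F : ℂ) := by
    calc S * (starRingEnd ℂ) S
        = ∑ x : F, ∑ w : F, e (a * x ^ 2 + b * x + c) *
            (starRingEnd ℂ) (e (a * w ^ 2 + b * w + c)) := by
          rw [hS, map_sum, Finset.sum_mul_sum]
      _ = ∑ w : F, ∑ x : F, e ((a * x ^ 2 + b * x + c) - (a * w ^ 2 + b * w + c)) := by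
          rw [Finset.sum_comm]
          refine Finset.sum_congr rfl fun w _ => Finset.sum_congr rfl fun x _ => ?_
          rw [← AddChar.map_neg_eq_conj, ← AddChar.map_add_eq_mul, sub_eq_add_neg]
      _ = ∑ w : F, ∑ d : F, e ((a * (w + d) ^ 2 + b * (w + d) + c) - (a * w ^ 2 + b * w + c)) := by
          refine Finset.sum_congr rfl fun w _ => ?_
          exact (Fintype.sum_equiv (Equiv.addLeft w) _ _ fun d => by simp).symm
      _ = ∑ d : F, e (a * d ^ 2 + b * d) * ∑ w : F, e ((2 * a * d) * w) := by
          rw [Finset.sum_comm]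
          refine Finset.sum_congr rfl fun d _ => ?_
          rw [Finset.mul_sum]
          refine Finset.sum_congr rfl fun w _ => ?_
          rw [← AddChar.map_add_eq_mul]
          congr 1
          ring
      _ = (Fintype.card F : ℂ) := by
          rw [Finset.sum_eq_single 0]
          · simp [Finset.card_univ]
          · intro d _ hd
            rw [sum_shift_zero e he (mul_ne_zero (mul_ne_zero h2 ha) hd), mul_zero]
          · simp
  have habs : ‖S‖ ^ 2 = (Fintype.card F : ℝ) := by
    have := congrArg (‖·‖) key
    rwa [norm_mul, Complex.norm_conj, ← sq, Complex.norm_natCast] at this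
  rw [← habs, Real.sqrt_sq (norm_nonneg S)]

/-- The kernel `B_h(y,z) = ∑_x e(−x²/y + (x−h)²/(y+h) + x²/z − (x−h)²/(z+h))`. -/
noncomputable def Bker {F : Type} [Field F] [Fintype F] (e : AddChar F ℂ) (h y z : F) : ℂ :=
  ∑ x, e (-(x ^ 2) / y + (x - h) ^ 2 / (y + h) + x ^ 2 / z - (x - h) ^ 2 / (z + h))

/-- evaluation of `B_h(y,z)`: it equals `q` on the diagonal, vanishes
when `y ≠ z` and `h + y + z = 0`, and has modulus `q^{1/2}` when `y ≠ z` and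
`h + y + z ≠ 0`. -/
theorem statement6 (F : Type) [Field F] [Fintype F] (hchar : ringChar F ≠ 2)
    (e : AddChar F ℂ) (he : e ≠ 1) (h : F) (hh : h ≠ 0) :
    (∀ y : F, y ≠ 0 → y + h ≠ 0 → Bker e h y y = (Fintype.card F : ℂ)) ∧
    (∀ y z : F, y ≠ 0 → y + h ≠ 0 → z ≠ 0 → z + h ≠ 0 → y ≠ z → h + y + z = 0 →
      Bker e h y z = 0) ∧
    (∀ y z : F, y ≠ 0 → y + h ≠ 0 → z ≠ 0 → z + h ≠ 0 → y ≠ z → h + y + z ≠ 0 →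
      ‖Bker e h y z‖ = Real.sqrt (Fintype.card F)) := by
  have h2 : (2 : F) ≠ 0 := Ring.two_ne_zero hchar
  refine ⟨?_, ?_, ?_⟩
  · intro y hy hyh
    have hz : ∀ x : F, -(x ^ 2) / y + (x - h) ^ 2 / (y + h) + x ^ 2 / y - (x - h) ^ 2 / (y + h)
        = 0 := fun x => by ring
    simp [Bker, hz, Finset.card_univ]
  · intro y z hy hyh hz hzh hyz hsum
    have hzval : z = -h - y := by linear_combination hsum
    subst hzval
    have h2yh : 2 * y + h ≠ 0 := fun H => hyz (by linear_combination H)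
    have hb : -(2 * h * (2 * y + h)) / (y * (y + h)) ≠ 0 :=
      div_ne_zero (neg_ne_zero.mpr (mul_ne_zero (mul_ne_zero h2 hh) h2yh))
        (mul_ne_zero hy hyh)
    have harg : ∀ x : F, -(x ^ 2) / y + (x - h) ^ 2 / (y + h) + x ^ 2 / (-h - y)
        - (x - h) ^ 2 / (-h - y + h)
        = (-(2 * h * (2 * y + h)) / (y * (y + h))) * x + (h ^ 2 / (y + h) + h ^ 2 / y) := by
      intro x
      have hny : -h - y ≠ 0 := hz
      field_simp
      ring
    simp only [Bker, harg, AddChar.map_add_eq_mul, ← Finset.sum_mul,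
      sum_shift_zero e he hb, zero_mul]
  · intro y z hy hyh hz hzh hyz hsum
    have harg : ∀ x : F, -(x ^ 2) / y + (x - h) ^ 2 / (y + h) + x ^ 2 / z - (x - h) ^ 2 / (z + h)
        = (-(1 / y) + 1 / (y + h) + 1 / z - 1 / (z + h)) * x ^ 2
          + (-(2 * h) / (y + h) + 2 * h / (z + h)) * x
          + (h ^ 2 / (y + h) - h ^ 2 / (z + h)) := fun x => by ring
    have ha : (-(1 / y) + 1 / (y + h) + 1 / z - 1 / (z + h)) ≠ 0 := by
      have heq : (-(1 / y) + 1 / (y + h) + 1 / z - 1 / (z + h))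
          = h * (y - z) * (h + y + z) / (y * (y + h) * z * (z + h)) := by
        field_simp
        ring
      rw [heq]
      exact div_ne_zero (mul_ne_zero (mul_ne_zero hh (sub_ne_zero.mpr hyz)) hsum)
        (mul_ne_zero (mul_ne_zero (mul_ne_zero hy hyh) hz) hzh)
    simp only [Bker, harg]
    exact quad_abs hchar e he _ _ _ ha
end

section
/- Let F_q be a finite field of odd characteristic with q elements and let e : F_q → ℂ be a nontrivial additive character. For all f₁, f₂ : F_q → ℂ one has the identity ‖𝒜(f₁,f₂) − E[f₁]·E[f₂]‖₂ = (∑_{m ∈ F_q} |∑_{n ∈ F_q, n ≠ 0} f̂₁(m−n)·f̂₂(n)·K(m−n, n)|²)^{1/2}. -/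
open Finset

/-- The Gauss-sum kernel `K(a,b) = (1/q) ∑_y e(ay + by²)`. -/
noncomputable def Kker {F : Type} [Field F] [Fintype F] (e : AddChar F ℂ) (a b : F) : ℂ :=
  (∑ y, e (a * y + b * y ^ 2)) / (Fintype.card F : ℂ)

/-- The Fourier transform `f̂(ξ) = (1/q) ∑_x f(x) e(−xξ)`. -/
noncomputable def dft {F : Type} [Field F] [Fintype F] (e : AddChar F ℂ) (f : F → ℂ)
    (ξ : F) : ℂ :=
  (∑ x, f x * e (-(x * ξ))) / (Fintype.card F : ℂ)

set_option linter.unusedSectionVars false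
set_option linter.unusedVariables false
set_option maxHeartbeats 1000000

section Aux
variable {F : Type} [Field F] [Fintype F] [DecidableEq F]

lemma qC_ne : (Fintype.card F : ℂ) ≠ 0 := Nat.cast_ne_zero.mpr Fintype.card_ne_zero

lemma sum_e_mul (e : AddChar F ℂ) (he : e ≠ 1) (c : F) :
    ∑ x : F, e (x * c) = if c = 0 then (Fintype.card F : ℂ) else 0 := by
  have := AddChar.sum_mulShift c (AddChar.IsPrimitive.of_ne_one he)
  simpa using this

lemma conj_e (e : AddChar F ℂ) (a : F) : (starRingEnd ℂ) (e a) = e (-a) := by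
  have hp : 0 < ringChar F := by
    haveI := ringChar.charP F
    exact (CharP.char_is_prime F (ringChar F)).pos
  rw [AddChar.starComp_apply hp, AddChar.inv_apply]

lemma inversion (e : AddChar F ℂ) (he : e ≠ 1) (f : F → ℂ) (x : F) :
    ∑ ξ, dft e f ξ * e (x * ξ) = f x := by
  simp_rw [dft, div_mul_eq_mul_div, sum_mul, mul_assoc, ← AddChar.map_add_eq_mul]
  rw [← sum_div, Finset.sum_comm]
  have h1 : ∀ t ξ : F, -(t * ξ) + x * ξ = ξ * (x - t) := by intros; ring
  simp_rw [h1, ← Finset.mul_sum, sum_e_mul e he]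
  rw [Finset.sum_eq_single x]
  · simp [qC_ne]
  · intro t _ ht
    rw [if_neg (fun h => ht (sub_eq_zero.mp h).symm), mul_zero]
  · simp

lemma parseval_c (e : AddChar F ℂ) (he : e ≠ 1) (f : F → ℂ) :
    ∑ m, dft e f m * (starRingEnd ℂ) (dft e f m)
      = (∑ x, f x * (starRingEnd ℂ) (f x)) / (Fintype.card F : ℂ) := by
  have hq := (qC_ne (F := F))
  calc ∑ m, dft e f m * (starRingEnd ℂ) (dft e f m)
      = ∑ m, ∑ x, ∑ t, f x * (starRingEnd ℂ) (f t) * e (m * (t - x))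
          / ((Fintype.card F : ℂ) * (Fintype.card F : ℂ)) := by
        refine Finset.sum_congr rfl fun m _ => ?_
        rw [dft, map_div₀, map_sum, map_natCast, div_mul_div_comm, Finset.sum_mul_sum, sum_div]
        refine Finset.sum_congr rfl fun x _ => ?_
        rw [sum_div]
        refine Finset.sum_congr rfl fun t _ => ?_
        congr 1
        rw [map_mul, conj_e, neg_neg]
        calc f x * e (-(x * m)) * ((starRingEnd ℂ) (f t) * e (t * m))
            = f x * (starRingEnd ℂ) (f t) * (e (-(x * m)) * e (t * m)) := by ring
          _ = f x * (starRingEnd ℂ) (f t) * e (m * (t - x)) := by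
              rw [← AddChar.map_add_eq_mul]; congr 1; ring
    _ = ∑ x, ∑ t, f x * (starRingEnd ℂ) (f t) * (∑ m, e (m * (t - x)))
          / ((Fintype.card F : ℂ) * (Fintype.card F : ℂ)) := by
        rw [Finset.sum_comm]
        refine Finset.sum_congr rfl fun x _ => ?_
        rw [Finset.sum_comm]
        refine Finset.sum_congr rfl fun t _ => ?_
        rw [← Finset.sum_div, ← Finset.mul_sum]
    _ = (∑ x, f x * (starRingEnd ℂ) (f x)) / (Fintype.card F : ℂ) := by
        simp_rw [sum_e_mul e he]
        rw [sum_div]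
        refine Finset.sum_congr rfl fun x _ => ?_
        rw [Finset.sum_eq_single x]
        · rw [if_pos (sub_self x)]
          field_simp
        · intro t _ ht
          rw [if_neg (fun h => ht (sub_eq_zero.mp h)), mul_zero, zero_div]
        · simp

lemma parseval (e : AddChar F ℂ) (he : e ≠ 1) (f : F → ℂ) :
    (∑ x, ‖f x‖ ^ 2) / (Fintype.card F : ℝ) =
      ∑ m, ‖dft e f m‖ ^ 2 := by
  have h := parseval_c e he f
  have h2 : ∀ z : ℂ, z * (starRingEnd ℂ) z = ((‖z‖ ^ 2 : ℝ) : ℂ) := by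
    intro z
    rw [Complex.mul_conj, Complex.sq_norm]
  simp_rw [h2] at h
  exact_mod_cast h.symm

lemma xsum (e : AddChar F ℂ) (he : e ≠ 1) (f₁ f₂ : F → ℂ) (m y : F) :
    ∑ x, f₁ (x + y) * f₂ (x + y ^ 2) * e (-(x * m))
      = (Fintype.card F : ℂ) *
        ∑ b, dft e f₁ (m - b) * dft e f₂ b * e ((m - b) * y + b * y ^ 2) := by
  have h2 : ∀ t : F, f₂ t = ∑ b, dft e f₂ b * e (t * b) :=
    fun t => (inversion e he f₂ t).symm
  calc ∑ x, f₁ (x + y) * f₂ (x + y ^ 2) * e (-(x * m))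
      = ∑ x, ∑ b, dft e f₂ b * (f₁ (x + y) * e (-(x * m) + (x + y ^ 2) * b)) := by
        refine Finset.sum_congr rfl fun x _ => ?_
        rw [h2 (x + y ^ 2), Finset.mul_sum, Finset.sum_mul]
        refine Finset.sum_congr rfl fun b _ => ?_
        rw [AddChar.map_add_eq_mul]; ring
    _ = ∑ b, ∑ x, dft e f₂ b * (f₁ (x + y) * e (-(x * m) + (x + y ^ 2) * b)) :=
        Finset.sum_comm
    _ = ∑ b, ∑ u, dft e f₂ b *
          (f₁ u * (e (-(u * (m - b))) * e ((m - b) * y + b * y ^ 2))) := by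
        refine Finset.sum_congr rfl fun b _ => ?_
        refine Fintype.sum_equiv (Equiv.addRight y) _ _ fun x => ?_
        simp only [Equiv.coe_addRight]
        congr 1
        rw [← AddChar.map_add_eq_mul]
        congr 1
        ring
    _ = (Fintype.card F : ℂ) *
        ∑ b, dft e f₁ (m - b) * dft e f₂ b * e ((m - b) * y + b * y ^ 2) := by
        rw [Finset.mul_sum]
        refine Finset.sum_congr rfl fun b _ => ?_
        have : ∀ u : F, dft e f₂ b * (f₁ u * (e (-(u * (m - b))) * e ((m - b) * y + b * y ^ 2)))
            = (f₁ u * e (-(u * (m - b)))) * (dft e f₂ b * e ((m - b) * y + b * y ^ 2)) := by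
          intro u; ring
        simp_rw [this, ← Finset.sum_mul]
        simp only [dft]
        have hq := (qC_ne (F := F))
        field_simp
        ring_nf
        simp_rw [show ∀ x : F, -(m * x) + b * x = -(x * m) + x * b from fun x => by ring]
        ring
end Aux

section Main
variable {F : Type} [Field F] [Fintype F] [DecidableEq F]
set_option linter.unusedSectionVars false

lemma dft_bilin (e : AddChar F ℂ) (he : e ≠ 1) (f₁ f₂ : F → ℂ) (m : F) :
    dft e (bilinAvg f₁ f₂) m = ∑ n, dft e f₁ (m - n) * dft e f₂ n * Kker e (m - n) n := by
  have hq := (qC_ne (F := F))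
  calc dft e (bilinAvg f₁ f₂) m
      = (∑ x, ∑ y, f₁ (x + y) * f₂ (x + y ^ 2) * e (-(x * m)) / (Fintype.card F : ℂ))
          / (Fintype.card F : ℂ) := by
        rw [dft]
        congr 1
        refine Finset.sum_congr rfl fun x _ => ?_
        rw [bilinAvg, div_mul_eq_mul_div, Finset.sum_mul, sum_div]
    _ = (∑ y, (∑ x, f₁ (x + y) * f₂ (x + y ^ 2) * e (-(x * m))) / (Fintype.card F : ℂ))
          / (Fintype.card F : ℂ) := by
        rw [Finset.sum_comm]
        congr 1
        exact Finset.sum_congr rfl fun y _ => (Finset.sum_div _ _ _).symm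
    _ = (∑ y, ∑ b, dft e f₁ (m - b) * dft e f₂ b * e ((m - b) * y + b * y ^ 2))
          / (Fintype.card F : ℂ) := by
        congr 1
        refine Finset.sum_congr rfl fun y _ => ?_
        rw [xsum e he f₁ f₂ m y, mul_div_cancel_left₀ _ hq]
    _ = ∑ n, dft e f₁ (m - n) * dft e f₂ n * Kker e (m - n) n := by
        rw [Finset.sum_comm, sum_div]
        refine Finset.sum_congr rfl fun b _ => ?_
        rw [Kker, ← Finset.mul_sum, mul_div_assoc]

lemma dft_sub (e : AddChar F ℂ) (f : F → ℂ) (c : ℂ) (m : F) :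
    dft e (fun x => f x - c) m = dft e f m - dft e (fun _ => c) m := by
  simp only [dft, ← sub_div, ← Finset.sum_sub_distrib, sub_mul]

lemma dft_const (e : AddChar F ℂ) (he : e ≠ 1) (c : ℂ) (m : F) :
    dft e (fun _ => c) m = if m = 0 then c else 0 := by
  rw [dft]
  have h : ∀ x : F, c * e (-(x * m)) = c * e (x * (-m)) := by
    intro x; congr 1; congr 1; ring
  simp_rw [h, ← Finset.mul_sum, sum_e_mul e he]
  rcases eq_or_ne m 0 with rfl | hm
  · simp [qC_ne]
  · rw [if_neg (by simpa using hm), if_neg hm, mul_zero, zero_div]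

lemma dft_zero (e : AddChar F ℂ) (f : F → ℂ) : dft e f 0 = expect f := by
  simp [dft, _root_.expect]

lemma Kker_zero (e : AddChar F ℂ) (he : e ≠ 1) (a : F) :
    Kker e a 0 = if a = 0 then 1 else 0 := by
  rw [Kker]
  have h : ∀ y : F, a * y + 0 * y ^ 2 = y * a := by intro y; ring
  simp_rw [h, sum_e_mul e he]
  rcases eq_or_ne a 0 with rfl | ha
  · simp [qC_ne]
  · simp [ha]

lemma dft_main (e : AddChar F ℂ) (he : e ≠ 1) (f₁ f₂ : F → ℂ) (m : F) :
    dft e (fun x => bilinAvg f₁ f₂ x - expect f₁ * expect f₂) m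
      = ∑ n ∈ Finset.univ.filter (fun n : F => n ≠ 0),
          dft e f₁ (m - n) * dft e f₂ n * Kker e (m - n) n := by
  rw [dft_sub, dft_bilin e he, dft_const e he]
  have hfilter : Finset.univ.filter (fun n : F => n ≠ 0) = Finset.univ.erase 0 := by
    ext n; simp [Finset.mem_erase, and_comm]
  rw [hfilter, ← Finset.add_sum_erase _ _ (Finset.mem_univ (0 : F))]
  have ht0 : dft e f₁ (m - 0) * dft e f₂ 0 * Kker e (m - 0) 0
      = if m = 0 then expect f₁ * expect f₂ else 0 := by
    rw [sub_zero, dft_zero, Kker_zero e he]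
    rcases eq_or_ne m 0 with rfl | hm
    · simp [dft_zero]
    · simp [hm]
  rw [ht0]
  ring

end Main

/-- the Parseval identity
`‖𝒜(f₁,f₂) − E[f₁]E[f₂]‖₂ = (∑_m |∑_{n ≠ 0} f̂₁(m−n) f̂₂(n) K(m−n,n)|²)^{1/2}`. -/
theorem statement10 (F : Type) [Field F] [Fintype F] [DecidableEq F]
    (hchar : ringChar F ≠ 2) (e : AddChar F ℂ) (he : e ≠ 1) (f₁ f₂ : F → ℂ) :
    norm2 (fun x => bilinAvg f₁ f₂ x - expect f₁ * expect f₂) =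
      Real.sqrt (∑ m, ‖∑ n ∈ Finset.univ.filter (fun n : F => n ≠ 0),
          dft e f₁ (m - n) * dft e f₂ n * Kker e (m - n) n‖ ^ 2) := by
  rw [norm2, parseval e he]
  congr 1
  refine Finset.sum_congr rfl fun m _ => ?_
  rw [dft_main e he]
end

section
/- There is an absolute constant c > 0 such that for every finite field F_q of odd characteristic with q elements, there exists a subset A ⊆ F_q with |A| ≥ c·q^{1/2} containing no nontrivial quadratic progression; that is, there are no x ∈ F_q and y ≠ 0 with x, x+y, x+y² all in A. -/
set_option maxHeartbeats 1000000

open Finset Module Submodule in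
lemma aux11 (F : Type) [Field F] [Fintype F] (p k M : ℕ) [Fact p.Prime] [CharP F p]
    (hM1 : 1 ≤ M) (hMp : M ≤ p)
    (n : ℕ) (hn : Fintype.card F = p ^ n) (hk : k + 1 ≤ n)
    (hcount : (p ^ k * (2 * M - 1)) ^ 2 + 1 < Fintype.card F) :
    ∃ A : Finset F, A.card = p ^ k * M ∧
      ¬ ∃ x y : F, y ≠ 0 ∧ x ∈ A ∧ x + y ∈ A ∧ x + y ^ 2 ∈ A := by
  classical
  letI : Algebra (ZMod p) F := ZMod.algebra F p
  have hfr : Module.finrank (ZMod p) F = n := by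
    have hc : Fintype.card F = p ^ Module.finrank (ZMod p) F := by
      rw [card_eq_pow_finrank (K := ZMod p) (V := F), ZMod.card]
    have hp2 : 2 ≤ p := (Fact.out : p.Prime).two_le
    exact Nat.pow_right_injective hp2 (hc.symm.trans hn)
  have h1 : (1 : F) ≠ 0 := one_ne_zero
  obtain ⟨W, hW⟩ := Submodule.exists_isCompl (Submodule.span (ZMod p) {(1 : F)})
  have hWrank : finrank (ZMod p) W + 1 = finrank (ZMod p) F := by
    have := Submodule.finrank_add_eq_of_isCompl hW
    rw [finrank_span_singleton h1] at this
    omega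
  have hkW : k ≤ finrank (ZMod p) ↥W := by omega
  set bW := Module.finBasis (ZMod p) ↥W with hbW
  set e : Fin k → W := fun j => bW (Fin.castLE hkW j) with he
  have hli : LinearIndependent (ZMod p) e :=
    bW.linearIndependent.comp _ (Fin.castLE_injective hkW)
  set σ : (Fin k → ZMod p) → W := fun c => ∑ j, c j • e j with hσ
  have hσsub : ∀ c c', σ c - σ c' = σ (c - c') := by
    intro c c'
    simp only [hσ, Pi.sub_apply, sub_smul, Finset.sum_sub_distrib]
    rw [← Finset.sum_sub_distrib]; exact Finset.sum_congr rfl (fun x _ => (sub_smul _ _ _).symm)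
  have hmem1 : ∀ m : ℤ, ((m : ℤ) : F) ∈ Submodule.span (ZMod p) {(1 : F)} := by
    intro m
    exact Submodule.mem_span_singleton.2 ⟨(m : ZMod p), by
      rw [Algebra.smul_def, mul_one, map_intCast]⟩
  set ψ : (Fin k → ZMod p) × Fin M → F :=
    fun z => ((σ z.1 : W) : F) + ((z.2 : ℕ) : F) with hψ
  -- injectivity of natural number casts below p
  have hnat : ∀ i i' : ℕ, i < p → i' < p → ((i : ℕ) : F) = ((i' : ℕ) : F) → i = i' := by
    intro i i' hi hi' h
    have h2 : algebraMap (ZMod p) F ((i : ℕ) : ZMod p) = algebraMap (ZMod p) F ((i' : ℕ) : ZMod p) := by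
      rw [map_natCast, map_natCast]; exact h
    have h3 := (algebraMap (ZMod p) F).injective h2
    have h4 := congrArg ZMod.val h3
    rwa [ZMod.val_cast_of_lt hi, ZMod.val_cast_of_lt hi'] at h4
  have hinj : Function.Injective ψ := by
    rintro ⟨c, i⟩ ⟨c', i'⟩ h
    simp only [hψ] at h
    have hww : ((σ c - σ c' : W) : F) = ((i' : ℕ) : F) - ((i : ℕ) : F) := by
      push_cast
      linear_combination h
    have hmem : ((σ c - σ c' : W) : F) ∈ Submodule.span (ZMod p) {(1 : F)} := by
      rw [hww]
      have := hmem1 ((i' : ℕ) - (i : ℕ) : ℤ)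
      push_cast at this
      exact this
    have hz : ((σ c - σ c' : W) : F) = 0 :=
      (Submodule.disjoint_def.mp hW.disjoint) _ hmem (σ c - σ c').2
    have hσeq : σ c = σ c' := by
      have : (σ c - σ c' : W) = 0 := by
        exact Subtype.ext hz
      exact sub_eq_zero.mp this
    have hieq : (i : Fin M) = i' := by
      have hcast : ((i : ℕ) : F) = ((i' : ℕ) : F) := by
        rw [hσeq] at h
        exact add_left_cancel h
      exact Fin.ext (hnat _ _ (lt_of_lt_of_le i.2 hMp) (lt_of_lt_of_le i'.2 hMp) hcast)
    have hceq : c = c' := by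
      have hz2 : σ (c - c') = 0 := by rw [← hσsub, hσeq, sub_self]
      have := Fintype.linearIndependent_iff.mp hli (c - c') hz2
      funext j
      have := this j
      simpa [sub_eq_zero] using this
    exact Prod.ext hceq hieq
  set B : Finset F := Finset.image ψ Finset.univ with hB
  have hBcard : B.card = p ^ k * M := by
    rw [hB, Finset.card_image_of_injective _ hinj, Finset.card_univ, Fintype.card_prod,
      Fintype.card_fun, ZMod.card, Fintype.card_fin, Fintype.card_fin]
  set ψ₂ : (Fin k → ZMod p) × Fin (2 * M - 1) → F :=
    fun z => ((σ z.1 : W) : F) + ((z.2 : ℕ) : F) - ((M - 1 : ℕ) : F) with hψ₂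
  set D : Finset F := Finset.image ψ₂ Finset.univ with hD
  have hDcard : D.card ≤ p ^ k * (2 * M - 1) := by
    calc D.card ≤ Fintype.card ((Fin k → ZMod p) × Fin (2 * M - 1)) := by
          rw [hD]
          exact (Finset.card_image_le).trans (le_of_eq (Finset.card_univ))
      _ = p ^ k * (2 * M - 1) := by
          rw [Fintype.card_prod, Fintype.card_fun, ZMod.card, Fintype.card_fin, Fintype.card_fin]
  have hDsub : ∀ b ∈ B, ∀ b' ∈ B, b - b' ∈ D := by
    intro b hb b' hb'
    rw [hB, Finset.mem_image] at hb hb'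
    obtain ⟨⟨c, i⟩, -, rfl⟩ := hb
    obtain ⟨⟨c', i'⟩, -, rfl⟩ := hb'
    rw [hD, Finset.mem_image]
    have hjlt : (i : ℕ) + (M - 1) - (i' : ℕ) < 2 * M - 1 := by
      have := i.2; have := i'.2; omega
    refine ⟨⟨c - c', ⟨(i : ℕ) + (M - 1) - (i' : ℕ), hjlt⟩⟩, Finset.mem_univ _, ?_⟩
    have hjeq : ((i : ℕ) + (M - 1) - (i' : ℕ)) + (i' : ℕ) = (i : ℕ) + (M - 1) := by
      have := i'.2; omega
    have hcast : ((((i : ℕ) + (M - 1) - (i' : ℕ)) : ℕ) : F)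
        = ((i : ℕ) : F) + ((M - 1 : ℕ) : F) - ((i' : ℕ) : F) := by
      have := congrArg (fun t : ℕ => (t : F)) hjeq
      push_cast at this ⊢
      linear_combination this
    simp only [hψ₂, hψ, ← hσsub]
    push_cast [hcast]
    ring
  set Bad : Finset F := Finset.image (fun z : F × F => z.2 / z.1 ^ 2) (D ×ˢ D) with hBad
  have hBadcard : Bad.card ≤ (p ^ k * (2 * M - 1)) ^ 2 := by
    calc Bad.card ≤ (D ×ˢ D).card := Finset.card_image_le
      _ = D.card * D.card := Finset.card_product D D
      _ ≤ (p ^ k * (2 * M - 1)) * (p ^ k * (2 * M - 1)) := Nat.mul_le_mul hDcard hDcard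
      _ = (p ^ k * (2 * M - 1)) ^ 2 := (sq _).symm
  have hex : ∃ l : F, l ∉ insert (0 : F) Bad := by
    by_contra hcon
    push_neg at hcon
    have hsub : (Finset.univ : Finset F) ⊆ insert (0 : F) Bad := fun x _ => hcon x
    have := Finset.card_le_card hsub
    rw [Finset.card_univ] at this
    have h5 := Finset.card_insert_le (0 : F) Bad
    omega
  obtain ⟨l, hl⟩ := hex
  have hl0 : l ≠ 0 := fun h => hl (h ▸ Finset.mem_insert_self 0 Bad)
  have hlB : l ∉ Bad := fun h => hl (Finset.mem_insert_of_mem h)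
  refine ⟨Finset.image (fun b => l * b) B, ?_, ?_⟩
  · rw [Finset.card_image_of_injective _ (mul_right_injective₀ hl0)]
    exact hBcard
  · rintro ⟨x, y, hy, hx, hxy, hxy2⟩
    rw [Finset.mem_image] at hx hxy hxy2
    obtain ⟨b₀, hb₀B, hb₀⟩ := hx
    obtain ⟨b₁, hb₁B, hb₁⟩ := hxy
    obtain ⟨b₂, hb₂B, hb₂⟩ := hxy2
    have hyd : y = l * (b₁ - b₀) := by rw [mul_sub, hb₀, hb₁]; ring
    have hd0 : b₁ - b₀ ≠ 0 := by
      intro h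
      rw [h, mul_zero] at hyd
      exact hy hyd
    have hy2d : y ^ 2 = l * (b₂ - b₀) := by rw [mul_sub, hb₀, hb₂]; ring
    have hkey : l = (b₂ - b₀) / (b₁ - b₀) ^ 2 := by
      rw [eq_div_iff (pow_ne_zero 2 hd0)]
      have : (l * (b₁ - b₀)) ^ 2 = l * (b₂ - b₀) := by rw [← hyd, ← hy2d]
      have h6 : l * (l * (b₁ - b₀) ^ 2) = l * (b₂ - b₀) := by ring_nf; ring_nf at this; linear_combination this
      exact mul_left_cancel₀ hl0 h6
    apply hlB
    rw [hBad, Finset.mem_image]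
    exact ⟨(b₁ - b₀, b₂ - b₀), Finset.mem_product.2 ⟨hDsub _ hb₁B _ hb₀B, hDsub _ hb₂B _ hb₀B⟩,
      hkey.symm⟩

/-- there is an absolute constant `c > 0` such that every finite field
of odd characteristic contains a subset `A` with `|A| ≥ c·q^{1/2}` and no nontrivial
quadratic progression. -/
theorem statement11 :
    ∃ c : ℝ, 0 < c ∧
      ∀ (F : Type) [Field F] [Fintype F], ringChar F ≠ 2 →
        ∃ A : Finset F,
          c * Real.sqrt (Fintype.card F) ≤ (A.card : ℝ) ∧
          ¬ ∃ x y : F, y ≠ 0 ∧ x ∈ A ∧ x + y ∈ A ∧ x + y ^ 2 ∈ A := by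
  refine ⟨1/4, by norm_num, ?_⟩
  intro F _ _ hchar
  classical
  haveI : CharP F (ringChar F) := ringChar.charP F
  set p := ringChar F with hpdef
  obtain ⟨n', hp', hn⟩ := FiniteField.card F p
  haveI : Fact p.Prime := ⟨hp'⟩
  set n : ℕ := (n' : ℕ) with hndef
  have hn1 : 1 ≤ n := n'.2
  have hodd : Odd p := hp'.odd_of_ne_two hchar
  obtain ⟨m, hm⟩ := hodd
  have hm1 : 1 ≤ m := by have := hp'.two_le; omega
  have hp3 : 3 ≤ p := by omega
  have hsq : ∀ t : ℕ, Real.sqrt ((p : ℝ) ^ (2 * t)) = (p : ℝ) ^ t := by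
    intro t
    rw [show 2 * t = t * 2 by ring, pow_mul]
    exact Real.sqrt_sq (by positivity)
  rcases Nat.even_or_odd n with ⟨t, ht⟩ | ⟨t, ht⟩
  · -- n = 2t even
    have ht1 : 1 ≤ t := by omega
    have hps : p ^ (t + t) = (p ^ (t - 1)) ^ 2 * p ^ 2 := by
      rw [← pow_mul, ← pow_add]
      congr 1
      omega
    have hcount : (p ^ (t - 1) * (2 * m - 1)) ^ 2 + 1 < Fintype.card F := by
      rw [hn, ht, hps]
      have hP1 : 1 ≤ p ^ (t - 1) := Nat.one_le_pow _ _ (by omega)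
      have h2m : 2 * m - 1 = p - 2 := by omega
      rw [h2m]
      have hu : p - 2 + 2 = p := by omega
      set P := p ^ (t - 1)
      set u := p - 2 with hu2
      have hu1 : 1 ≤ u := by omega
      calc (P * u) ^ 2 + 1 = P ^ 2 * u ^ 2 + 1 := by ring
        _ < P ^ 2 * (u + 2) ^ 2 := by nlinarith [hP1, hu1]
        _ = P ^ 2 * p ^ 2 := by rw [hu]
    obtain ⟨A, hAcard, hAfree⟩ := aux11 F p (t - 1) m (by omega) (by omega) n hn
      (by omega) hcount
    refine ⟨A, ?_, hAfree⟩
    rw [hAcard, hn, ht, show t + t = 2 * t by ring]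
    push_cast [hsq t]
    have hptm : (p : ℝ) ^ t = (p : ℝ) ^ (t - 1) * p := by
      rw [← pow_succ]
      congr 1
      omega
    rw [hptm]
    have hP0 : (0 : ℝ) ≤ (p : ℝ) ^ (t - 1) := by positivity
    have hpm : (p : ℝ) ≤ 4 * m := by
      have : p ≤ 4 * m := by omega
      exact_mod_cast this
    nlinarith [hP0, hpm]
  · -- n = 2t + 1 odd
    set a := Nat.sqrt p with hadef
    set M : ℕ := max 1 (a / 2) with hMdef
    have hap : a ^ 2 ≤ p := Nat.sqrt_le' p
    have hpa : p < (a + 1) ^ 2 := Nat.lt_succ_sqrt' p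
    have hM1 : 1 ≤ M := le_max_left _ _
    have hMa : a ≤ 2 * M + 1 := by
      rcases le_max_iff.mp (le_refl M) with h | h
      all_goals omega
    have hC2 : (2 * M - 1) ^ 2 + 2 ≤ p := by
      rcases Nat.lt_or_ge a 2 with ha | ha
      · have hM : M = 1 := by
          rw [hMdef]; interval_cases a <;> simp
        rw [hM]
        have : 2 ≤ a * a + 2 * a := by nlinarith
        omega
      · have hM : 2 * M ≤ a := by
          have : a / 2 ≥ 1 := by omega
          rw [hMdef, max_eq_right this]
          omega
        have h1 : 2 * M - 1 ≤ a - 1 := by omega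
        have h2 : (2 * M - 1) ^ 2 ≤ (a - 1) ^ 2 := Nat.pow_le_pow_left h1 2
        have h3 : (a - 1) ^ 2 + 2 ≤ p := by
          have hb : a = (a - 1) + 1 := by omega
          nlinarith [hap, ha]
        omega
    have hcount : (p ^ t * (2 * M - 1)) ^ 2 + 1 < Fintype.card F := by
      rw [hn, ht]
      have hP1 : 1 ≤ p ^ t := Nat.one_le_pow _ _ (by omega)
      calc (p ^ t * (2 * M - 1)) ^ 2 + 1 = (p ^ t) ^ 2 * (2 * M - 1) ^ 2 + 1 := by ring
        _ ≤ (p ^ t) ^ 2 * (p - 2) + 1 := by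
            have := hC2
            exact Nat.add_le_add_right (Nat.mul_le_mul_left _ (by omega)) 1
        _ < (p ^ t) ^ 2 * p := by
            have h4 : (p ^ t) ^ 2 * (p - 2) + 2 * ((p ^ t) ^ 2) = (p ^ t) ^ 2 * p := by
              have h5 : p - 2 + 2 = p := by omega
              calc (p ^ t) ^ 2 * (p - 2) + 2 * ((p ^ t) ^ 2) = (p ^ t) ^ 2 * ((p - 2) + 2) := by
                    ring
                _ = (p ^ t) ^ 2 * p := by rw [h5]
            have hX1 : 1 ≤ (p ^ t) ^ 2 := Nat.one_le_pow _ _ (by omega)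
            omega
        _ = p ^ (2 * t + 1) := by ring
    have hMp : M ≤ p := by
      have h7 : a ≤ p := Nat.sqrt_le_self p
      omega
    obtain ⟨A, hAcard, hAfree⟩ := aux11 F p t M hM1 hMp n hn (by omega) hcount
    refine ⟨A, ?_, hAfree⟩
    rw [hAcard, hn, ht]
    have hp16 : (p : ℝ) ≤ 16 * (M : ℝ) ^ 2 := by
      have hnat16 : p ≤ 16 * M ^ 2 := by
        rcases Nat.lt_or_ge a 4 with ha | ha
        · nlinarith [hM1, hpa, ha]
        · have hM : 2 * M ≥ a - 1 := by omega
          nlinarith [hpa, ha, hM]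
      exact_mod_cast hnat16
    have hsqM : Real.sqrt (p : ℝ) ≤ 4 * (M : ℝ) := by
      rw [show (16 : ℝ) * (M : ℝ) ^ 2 = (4 * M) ^ 2 by ring] at hp16
      calc Real.sqrt (p : ℝ) ≤ Real.sqrt ((4 * M) ^ 2) := Real.sqrt_le_sqrt hp16
        _ = 4 * M := Real.sqrt_sq (by positivity)
    push_cast
    rw [show (p : ℝ) ^ (2 * t + 1) = ((p : ℝ) ^ t) ^ 2 * p by ring,
      Real.sqrt_mul (by positivity), Real.sqrt_sq (by positivity)]
    have hpt : (0 : ℝ) ≤ (p : ℝ) ^ t := by positivity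
    nlinarith [Real.sqrt_nonneg (p : ℝ), hsqM, hpt]
end

section
/- Let F be a finite field with q elements of odd characteristic, let K be a field extension of F of degree 2, and let ω ∈ K satisfy ω² ∈ F and ω ∉ F. Let L = {ω·a : a ∈ F} ⊆ K. Then |L| = q = |K|^{1/2}, and L contains no nontrivial quadratic progression: there are no x ∈ K and y ∈ K with y ≠ 0 such that x, x+y, x+y² all lie in L. -/
/-- The `F`-line `L = {ω·a : a ∈ F}` inside `K`. -/
def lineSet (F : Type) {K : Type} [CommSemiring F] [CommSemiring K] [Algebra F K]
    (ω : K) : Set K :=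
  Set.range fun a : F => ω * algebraMap F K a

/-- if `K/F` is a quadratic extension of finite fields of odd
characteristic and `ω ∈ K` satisfies `ω² ∈ F`, `ω ∉ F`, then the line
`L = ωF` has `|L| = q = |K|^{1/2}` and contains no nontrivial quadratic progression. -/
theorem statement12 (F K : Type) [Field F] [Fintype F] [Field K] [Fintype K]
    [Algebra F K] (hchar : ringChar F ≠ 2) (hrank : Module.finrank F K = 2)
    (ω : K) (hω2 : ω ^ 2 ∈ Set.range (algebraMap F K))
    (hω : ω ∉ Set.range (algebraMap F K)) :
    Nat.card (lineSet F ω) = Fintype.card F ∧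
    (Fintype.card F : ℝ) = Real.sqrt (Fintype.card K) ∧
    ¬ ∃ x y : K, y ≠ 0 ∧ x ∈ lineSet F ω ∧ x + y ∈ lineSet F ω ∧
        x + y ^ 2 ∈ lineSet F ω := by
  have hω0 : ω ≠ 0 := by
    rintro rfl
    exact hω ⟨0, by simp⟩
  have hinj : Function.Injective (fun a : F => ω * algebraMap F K a) := by
    intro a b h
    simp only [mul_right_inj' hω0] at h
    exact (algebraMap F K).injective h
  refine ⟨?_, ?_, ?_⟩
  · rw [lineSet, Nat.card_range_of_injective hinj, Nat.card_eq_fintype_card]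
  · have hcard : Fintype.card K = Fintype.card F ^ Module.finrank F K :=
      Module.card_eq_pow_finrank
    rw [hcard, hrank]
    push_cast
    rw [Real.sqrt_sq (by positivity)]
  · rintro ⟨x, y, hy, ⟨a, ha⟩, ⟨b, hb⟩, ⟨c, hc⟩⟩
    simp only at ha hb hc
    -- y = ω * (b - a)
    have hyval : y = ω * algebraMap F K (b - a) := by
      rw [map_sub, mul_sub, ha, hb]; ring
    have hy2F : y ^ 2 ∈ Set.range (algebraMap F K) := by
      obtain ⟨s, hs⟩ := hω2
      exact ⟨s * (b - a) ^ 2, by rw [map_mul, hs, map_pow, hyval]; ring⟩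
    have hy2 : y ^ 2 = ω * algebraMap F K (c - a) := by
      rw [map_sub, mul_sub, ha, hc]; ring
    have hca : c = a := by
      by_contra hne
      have h0 : algebraMap F K (c - a) ≠ 0 := by
        simp [sub_eq_zero, hne]
      apply hω
      obtain ⟨t, ht⟩ := hy2F
      refine ⟨t * (c - a)⁻¹, ?_⟩
      rw [map_mul, ht, hy2, map_inv₀]
      rw [mul_assoc, mul_inv_cancel₀ h0, mul_one]
    rw [hca, sub_self, map_zero, mul_zero, pow_eq_zero_iff (by norm_num)] at hy2
    exact hy hy2
end

section
/- Let F = F_q be a finite field of odd order q and let K be a field extension of F of degree 3. Then there exists a two-dimensional F-linear subspace V ⊆ K such that for all y ∈ K, if y ∈ V and y² ∈ V then y = 0. Consequently |V| = q² = |K|^{2/3} and V contains no nontrivial quadratic progression: there are no x ∈ K and y ≠ 0 with x, x+y, x+y² all in V. -/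
open Module Polynomial

section AuxQP

variable (F K : Type) [Field F] [Fintype F] [Field K] [Fintype K] [Algebra F K]

theorem li3 (hrank : Module.finrank F K = 3) (y : K)
    (hy : y ∉ Set.range (algebraMap F K)) : LinearIndependent F ![1, y, y^2] := by
  rw [Fintype.linearIndependent_iff]
  intro g hg
  by_contra hne
  push_neg at hne
  obtain ⟨i, hi⟩ := hne
  have hint : IsIntegral F y := Algebra.IsIntegral.isIntegral y
  set p : Polynomial F := C (g 0) + C (g 1) * X + C (g 2) * X ^ 2 with hp
  have hc0 : p.coeff 0 = g 0 := by simp [hp, coeff_add, coeff_C]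
  have hc1 : p.coeff 1 = g 1 := by simp [hp, coeff_add, coeff_C]
  have hc2 : p.coeff 2 = g 2 := by simp [hp, coeff_add, coeff_C]
  have hpne : p ≠ 0 := by
    intro h
    apply hi
    have h0 : g 0 = 0 := by rw [← hc0, h, coeff_zero]
    have h1 : g 1 = 0 := by rw [← hc1, h, coeff_zero]
    have h2 : g 2 = 0 := by rw [← hc2, h, coeff_zero]
    fin_cases i <;> assumption
  have haev : aeval y p = 0 := by
    have h3 : ∑ i : Fin 3, g i • ![1, y, y^2] i = g 0 • 1 + g 1 • y + g 2 • y^2 := by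
      simp [Fin.sum_univ_three]
    rw [h3] at hg
    simp only [hp, map_add, map_mul, aeval_C, aeval_X, map_pow, Algebra.smul_def] at hg ⊢
    rw [← hg]; ring
  have hdvd : minpoly F y ∣ p := minpoly.dvd F y haev
  have hdeg2 : p.natDegree ≤ 2 := by
    apply Polynomial.natDegree_le_iff_coeff_eq_zero.mpr
    intro n hn
    have h0 : n ≠ 0 := by omega
    have h1 : n ≠ 1 := by omega
    have h2 : n ≠ 2 := by omega
    simp [hp, coeff_C, coeff_X, coeff_X_pow, h0, h1, h2, Ne.symm h2, Ne.symm h1, Ne.symm h0]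
  have hdeg : (minpoly F y).natDegree ≤ 2 :=
    le_trans (Polynomial.natDegree_le_of_dvd hdvd hpne) hdeg2
  have hdvd3 : (minpoly F y).natDegree ∣ 3 := hrank ▸ minpoly.degree_dvd hint
  have hpos : 0 < (minpoly F y).natDegree := minpoly.natDegree_pos hint
  have h1 : (minpoly F y).natDegree = 1 := by
    interval_cases h : (minpoly F y).natDegree
    · rfl
    · exact absurd hdvd3 (by norm_num)
  exact absurd (RingHom.mem_range.mp ((minpoly.natDegree_eq_one_iff).mp h1)) (by
    simpa [Set.mem_range] using hy)

noncomputable def bas (hrank : Module.finrank F K = 3) (y : K)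
    (hy : y ∉ Set.range (algebraMap F K)) : Basis (Fin 3) F K :=
  basisOfLinearIndependentOfCardEqFinrank (li3 F K hrank y hy) (by simp [hrank])

theorem bas_apply (hrank : Module.finrank F K = 3) (y : K)
    (hy : y ∉ Set.range (algebraMap F K)) (i : Fin 3) :
    bas F K hrank y hy i = ![1, y, y^2] i := by
  rw [bas, coe_basisOfLinearIndependentOfCardEqFinrank]

theorem phi_cube (hrank : Module.finrank F K = 3) (y : K)
    (hy : y ∉ Set.range (algebraMap F K)) (φ : Module.Dual F K)
    (h1 : φ 1 = 1) (h2 : φ y = 0) (h3 : φ (y^2) = 0) : φ (y^3) ≠ 0 := by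
  intro hc
  have hy0 : y ≠ 0 := by
    rintro rfl
    exact hy ⟨0, by simp⟩
  set b := bas F K hrank y hy with hb
  have hrep := b.sum_repr y⁻¹
  have h1' : (1 : K) = ∑ i : Fin 3, b.repr y⁻¹ i • (y * b i) := by
    calc (1 : K) = y * y⁻¹ := (mul_inv_cancel₀ hy0).symm
    _ = y * ∑ i : Fin 3, b.repr y⁻¹ i • b i := by rw [hrep]
    _ = ∑ i : Fin 3, b.repr y⁻¹ i • (y * b i) := by
        rw [Finset.mul_sum]; congr 1; ext i; rw [mul_smul_comm]
  have := congrArg φ h1'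
  rw [h1, map_sum] at this
  simp only [map_smul] at this
  rw [Fin.sum_univ_three] at this
  rw [bas_apply F K hrank y hy 0, bas_apply F K hrank y hy 1,
    bas_apply F K hrank y hy 2] at this
  simp only [Matrix.cons_val_zero, Matrix.cons_val_one, Matrix.head_cons,
    Matrix.cons_val_two, Matrix.tail_cons, mul_one] at this
  rw [show y * y = y^2 by ring, show y * y^2 = y^3 by ring, h2, h3, hc] at this
  simp at this

-- the coordinate functional
theorem exists_good (hchar : ringChar F ≠ 2) (hrank : Module.finrank F K = 3) :
    ∃ φ : Module.Dual F K, φ 1 = 1 ∧ ∀ y : K, φ y = 0 → φ (y^2) = 0 → y = 0 := by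
  classical
  by_contra hcon
  push_neg at hcon
  set R := Set.range (algebraMap F K) with hR
  set q := Fintype.card F with hq
  have hq1 : 1 < q := Fintype.one_lt_card
  have halg_inj : Function.Injective (algebraMap F K) := (algebraMap F K).injective
  -- facts about membership in R
  have hmemR : ∀ (a : F), (algebraMap F K a) ∈ R := fun a => ⟨a, rfl⟩
  have hphi_alg : ∀ (φ : Module.Dual F K) (a : F), φ 1 = 1 → φ (algebraMap F K a) = a := by
    intro φ a h1
    rw [Algebra.algebraMap_eq_smul_one, map_smul, h1, smul_eq_mul, mul_one]
  -- Finite/Fintype instances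
  haveI : Finite (Module.Dual F K) :=
    Finite.of_injective (fun φ => (φ : K → F)) DFunLike.coe_injective
  letI : Fintype (Module.Dual F K) := Fintype.ofFinite _
  -- the set D
  letI : Fintype {φ : Module.Dual F K // φ 1 = 1} := Fintype.ofFinite _
  letI : Fintype {y : K // y ∉ R} := Fintype.ofFinite _
  -- y₀ outside R exists
  have hy₀ : ∃ y₀ : K, y₀ ∉ R := by
    by_contra h
    push_neg at h
    have hsurj : Function.Surjective (Algebra.linearMap F K) := by
      intro x; exact h x
    have e : F ≃ₗ[F] K := LinearEquiv.ofBijective (Algebra.linearMap F K) ⟨halg_inj, hsurj⟩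
    have := e.finrank_eq
    rw [finrank_self, hrank] at this
    omega
  obtain ⟨y₀, hy₀⟩ := hy₀
  -- card of D is q^2
  have hcardD : Fintype.card {φ : Module.Dual F K // φ 1 = 1} = q^2 := by
    set b := bas F K hrank y₀ hy₀ with hb
    have hb0 : b 0 = 1 := by rw [bas_apply]; rfl
    have hb1 : b 1 = y₀ := by rw [bas_apply]; rfl
    have hb2 : b 2 = y₀^2 := by rw [bas_apply]; rfl
    have e : {φ : Module.Dual F K // φ 1 = 1} ≃ (F × F) := {
      toFun := fun φ => (φ.1 y₀, φ.1 (y₀^2))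
      invFun := fun p => ⟨b.constr F ![1, p.1, p.2], by
        have := b.constr_basis F ![1, p.1, p.2] 0
        rwa [hb0] at this⟩
      left_inv := by
        rintro ⟨φ, hφ⟩
        ext1
        apply b.ext
        intro i
        fin_cases i
        · show (b.constr F ![1, φ y₀, φ (y₀^2)]) (b 0) = φ (b 0)
          rw [b.constr_basis, hb0, hφ]; rfl
        · show (b.constr F ![1, φ y₀, φ (y₀^2)]) (b 1) = φ (b 1)
          rw [b.constr_basis, hb1]; rfl
        · show (b.constr F ![1, φ y₀, φ (y₀^2)]) (b 2) = φ (b 2)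
          rw [b.constr_basis, hb2]; rfl
      right_inv := by
        rintro ⟨a, c⟩
        show ((b.constr F ![1, a, c]) y₀, (b.constr F ![1, a, c]) (y₀^2)) = (a, c)
        rw [← hb2, ← hb1, b.constr_basis, b.constr_basis]
        rfl
    }
    rw [Fintype.card_congr e, Fintype.card_prod, ← hq, sq]
  -- card of complement of R
  have hcardK : Fintype.card K = q^3 := by
    rw [← hrank]; exact card_eq_pow_finrank
  have hcardR : Fintype.card {y : K // y ∈ R} = q := by
    rw [← Nat.card_eq_fintype_card]
    have h1 : Nat.card {y : K // y ∈ R} = Nat.card R := rfl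
    rw [h1, hR, Nat.card_range_of_injective halg_inj, Nat.card_eq_fintype_card]
  have hcardCompl : Fintype.card {y : K // y ∉ R} = q^3 - q := by
    have := Fintype.card_subtype_compl (fun y : K => y ∈ R)
    rw [hcardK, hcardR] at this
    convert this using 2
  -- the fiber map
  have hcoordmem : ∀ (y : K) (hy : y ∉ R), (bas F K hrank y hy).coord 0 1 = 1 := by
    intro y hy
    have h1 : (1 : K) = bas F K hrank y hy 0 := by rw [bas_apply]; rfl
    rw [h1, Basis.coord_apply, Basis.repr_self, Finsupp.single_eq_same]
  set f : {y : K // y ∉ R} → {φ : Module.Dual F K // φ 1 = 1} :=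
    fun y => ⟨(bas F K hrank y.1 y.2).coord 0, hcoordmem y.1 y.2⟩ with hf
  -- fiber characterization
  have hfiber : ∀ (y : K) (hy : y ∉ R) (φ : Module.Dual F K) (hφ : φ 1 = 1),
      f ⟨y, hy⟩ = ⟨φ, hφ⟩ ↔ (φ y = 0 ∧ φ (y^2) = 0) := by
    intro y hy φ hφ
    set b := bas F K hrank y hy with hb
    have hb0 : b 0 = 1 := by rw [bas_apply]; rfl
    have hb1 : b 1 = y := by rw [bas_apply]; rfl
    have hb2 : b 2 = y^2 := by rw [bas_apply]; rfl
    constructor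
    · intro h
      have h' : (b.coord 0 : Module.Dual F K) = φ := congrArg Subtype.val h
      constructor
      · rw [← h', ← hb1, Basis.coord_apply, Basis.repr_self]
        simp
      · rw [← h', ← hb2, Basis.coord_apply, Basis.repr_self]
        simp
    · rintro ⟨h2, h3⟩
      apply Subtype.ext
      apply b.ext
      intro i
      fin_cases i
      · show b.coord 0 (b 0) = φ (b 0)
        rw [Basis.coord_apply, Basis.repr_self, hb0, hφ]; simp
      · show b.coord 0 (b 1) = φ (b 1)
        rw [Basis.coord_apply, Basis.repr_self, hb1, h2]; simp
      · show b.coord 0 (b 2) = φ (b 2)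
        rw [Basis.coord_apply, Basis.repr_self, hb2, h3]; simp
  -- each fiber has at least 2*(q-1) elements
  have hfiberbound : ∀ (φD : {φ : Module.Dual F K // φ 1 = 1}),
      (q - 1) * 2 ≤ Fintype.card {w : {y : K // y ∉ R} // f w = φD} := by
    rintro ⟨φ, hφ⟩
    obtain ⟨y, hφy, hφy2, hy0⟩ := hcon φ hφ
    have hyR : y ∉ R := by
      rintro ⟨a, rfl⟩
      rw [hphi_alg φ a hφ] at hφy
      exact hy0 (by rw [hφy, map_zero])
    set c := φ (y^3) with hc
    have hcne : c ≠ 0 := phi_cube F K hrank y hyR φ hφ hφy hφy2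
    have h2F : (2:F) ≠ 0 := Ring.two_ne_zero hchar
    set t := φ (y^4) / (2 * c) with ht
    set z := y^2 - t • y with hz
    have hφz : φ z = 0 := by
      rw [hz, map_sub, map_smul, hφy2, hφy, smul_zero, sub_zero]
    have hz2 : z^2 = y^4 - (2*t) • y^3 + (t^2) • y^2 := by
      rw [hz]
      simp only [smul_sub, smul_smul, Algebra.smul_def, map_mul, map_ofNat]
      push_cast
      ring
    have hφz2 : φ (z^2) = 0 := by
      rw [hz2, map_add, map_sub, map_smul, map_smul, hφy2, smul_zero, add_zero,
        smul_eq_mul, ← hc, ht]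
      field_simp
      ring
    have hzy : ∀ s : F, z ≠ s • y := by
      intro s hzs
      have hy2 : y^2 = (t + s) • y := by
        rw [add_smul, ← hzs, hz]; ring
      have : y * (y - algebraMap F K (t + s)) = 0 := by
        rw [mul_sub, ← pow_two, hy2, Algebra.smul_def]
        ring
      rcases mul_eq_zero.mp this with h | h
      · exact hy0 h
      · exact hyR ⟨t + s, by linear_combination -h⟩
    have hz0 : z ≠ 0 := by
      have := hzy 0
      rwa [zero_smul] at this
    have hzR : z ∉ R := by
      rintro ⟨a, ha⟩
      have : a = 0 := by rw [← hphi_alg φ a hφ, ha, hφz]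
      rw [this, map_zero] at ha
      exact hz0 ha.symm
    -- scaled elements stay in the fiber
    have hsmulR : ∀ (u : Fˣ) (w : K), w ∉ R → (u : F) • w ∉ R := by
      rintro u w hw ⟨a, ha⟩
      exact hw ⟨(u⁻¹ : Fˣ) * a, by rw [map_mul, ha, Algebra.smul_def, ← mul_assoc,
        ← map_mul, ← Units.val_mul, inv_mul_cancel, Units.val_one, map_one, one_mul]⟩
    have hsmulfib : ∀ (u : Fˣ) (w : K) (hw1 : φ w = 0) (hw2 : φ (w^2) = 0)
        (hwR : w ∉ R), f ⟨(u : F) • w, hsmulR u w hwR⟩ = ⟨φ, hφ⟩ := by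
      intro u w hw1 hw2 hwR
      rw [hfiber]
      constructor
      · rw [map_smul, hw1, smul_zero]
      · rw [_root_.smul_pow, map_smul, hw2]; simp
    -- injection from Fˣ × Bool
    set G : Fˣ × Bool → {w : {y : K // y ∉ R} // f w = (⟨φ, hφ⟩ : {φ : Module.Dual F K // φ 1 = 1})} :=
      fun p => if hs : p.2 = true
        then ⟨⟨(p.1 : F) • z, hsmulR p.1 z hzR⟩, hsmulfib p.1 z hφz hφz2 hzR⟩
        else ⟨⟨(p.1 : F) • y, hsmulR p.1 y hyR⟩, hsmulfib p.1 y hφy hφy2 hyR⟩ with hG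
    have hGinj : Function.Injective G := by
      rintro ⟨u, su⟩ ⟨v, sv⟩ huv
      rcases Bool.eq_false_or_eq_true su with rfl | rfl <;>
        rcases Bool.eq_false_or_eq_true sv with rfl | rfl
      · -- both z
        have hval : (u : F) • z = (v : F) • z := congrArg (fun w => w.1.1) huv
        have : ((u : F) - (v : F)) • z = 0 := by rw [sub_smul, hval, sub_self]
        rcases smul_eq_zero.mp this with h | h
        · have : (u : F) = (v : F) := by linear_combination h
          exact Prod.ext (Units.ext this) rfl
        · exact absurd h hz0
      · -- z vs y
        have hval : (u : F) • z = (v : F) • y := congrArg (fun w => w.1.1) huv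
        exfalso
        exact hzy ((u⁻¹ : Fˣ) * v) (by
          rw [mul_smul, ← hval, smul_smul, ← Units.val_mul, inv_mul_cancel,
            Units.val_one, one_smul])
      · -- y vs z
        have hval : (u : F) • y = (v : F) • z := congrArg (fun w => w.1.1) huv
        exfalso
        exact hzy ((v⁻¹ : Fˣ) * u) (by
          rw [mul_smul, hval, smul_smul, ← Units.val_mul, inv_mul_cancel,
            Units.val_one, one_smul])
      · -- both y
        have hval : (u : F) • y = (v : F) • y := congrArg (fun w => w.1.1) huv
        have : ((u : F) - (v : F)) • y = 0 := by rw [sub_smul, hval, sub_self]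
        rcases smul_eq_zero.mp this with h | h
        · have : (u : F) = (v : F) := by linear_combination h
          exact Prod.ext (Units.ext this) rfl
        · exact absurd h hy0
    calc (q - 1) * 2 = Fintype.card (Fˣ × Bool) := by
          rw [Fintype.card_prod, Fintype.card_bool, Fintype.card_units, hq]
    _ ≤ _ := Fintype.card_le_of_injective G hGinj
  -- double counting
  have hsum : Fintype.card {y : K // y ∉ R}
      = ∑ φD : {φ : Module.Dual F K // φ 1 = 1},
          Fintype.card {w : {y : K // y ∉ R} // f w = φD} := by
    rw [← Fintype.card_sigma]
    exact (Fintype.card_congr (Equiv.sigmaFiberEquiv f)).symm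
  have hbig : q^2 * ((q - 1) * 2) ≤ q^3 - q := by
    rw [← hcardD, ← hcardCompl]
    rw [hsum]
    calc Fintype.card {φ : Module.Dual F K // φ 1 = 1} * ((q-1)*2)
        = ∑ _φD : {φ : Module.Dual F K // φ 1 = 1}, (q-1)*2 := by
          rw [Finset.sum_const, Finset.card_univ, smul_eq_mul]
    _ ≤ _ := Finset.sum_le_sum (fun φD _ => hfiberbound φD)
  have hqle : q ≤ q^3 := Nat.le_self_pow (by norm_num) q
  have hfin := (Nat.le_sub_iff_add_le hqle).mp hbig
  obtain ⟨r, hr⟩ : ∃ r, q = r + 2 := ⟨q - 2, by omega⟩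
  rw [hr, show r + 2 - 1 = r + 1 from rfl] at hfin
  nlinarith [hfin]

end AuxQP

/-- in a cubic extension `K` of a finite field `F` of odd order `q`,
there is a two-dimensional `F`-linear subspace `V ⊆ K` such that `y ∈ V` and
`y² ∈ V` force `y = 0`; consequently `|V| = q² = |K|^{2/3}` and `V` contains no
nontrivial quadratic progression. -/
theorem statement13 (F K : Type) [Field F] [Fintype F] [Field K] [Fintype K]
    [Algebra F K] (hchar : ringChar F ≠ 2) (hrank : Module.finrank F K = 3) :
    ∃ V : Submodule F K, Module.finrank F V = 2 ∧
      (∀ y : K, y ∈ V → y ^ 2 ∈ V → y = 0) ∧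
      Nat.card V = Fintype.card F ^ 2 ∧
      ((Fintype.card F : ℝ) ^ 2 = (Fintype.card K : ℝ) ^ ((2 : ℝ) / 3)) ∧
      ¬ ∃ x y : K, y ≠ 0 ∧ x ∈ V ∧ x + y ∈ V ∧ x + y ^ 2 ∈ V := by
  classical
  obtain ⟨φ, hφ1, hgood⟩ := exists_good F K hchar hrank
  refine ⟨LinearMap.ker φ, ?_, ?_, ?_, ?_, ?_⟩
  · -- finrank ker = 2
    have hsurj : Function.Surjective φ := by
      intro c
      exact ⟨c • 1, by rw [map_smul, hφ1, smul_eq_mul, mul_one]⟩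
    have hrange : LinearMap.range φ = ⊤ := LinearMap.range_eq_top.mpr hsurj
    have := LinearMap.finrank_range_add_finrank_ker φ
    rw [hrange, finrank_top, finrank_self, hrank] at this
    omega
  · intro y hy hy2
    exact hgood y (LinearMap.mem_ker.mp hy) (LinearMap.mem_ker.mp hy2)
  · -- card
    have h2 : Module.finrank F (LinearMap.ker φ) = 2 := by
      have hsurj : Function.Surjective φ := by
        intro c
        exact ⟨c • 1, by rw [map_smul, hφ1, smul_eq_mul, mul_one]⟩
      have hrange : LinearMap.range φ = ⊤ := LinearMap.range_eq_top.mpr hsurj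
      have := LinearMap.finrank_range_add_finrank_ker φ
      rw [hrange, finrank_top, finrank_self, hrank] at this
      omega
    letI : Fintype (LinearMap.ker φ) := Fintype.ofFinite _
    rw [Nat.card_eq_fintype_card, card_eq_pow_finrank (K := F) (V := LinearMap.ker φ), h2]
  · -- real equation
    have hK : Fintype.card K = Fintype.card F ^ 3 := by
      rw [← hrank]; exact card_eq_pow_finrank
    have hq0 : (0:ℝ) ≤ (Fintype.card F : ℝ) := Nat.cast_nonneg _
    rw [hK]
    push_cast
    rw [show ((Fintype.card F : ℝ) ^ (3:ℕ)) = (Fintype.card F : ℝ) ^ ((3:ℕ):ℝ) from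
      (Real.rpow_natCast _ 3).symm, ← Real.rpow_mul hq0]
    norm_num
  · rintro ⟨x, y, hy0, hx, hxy, hxy2⟩
    apply hy0
    have h1 : y ∈ LinearMap.ker φ := by
      have := sub_mem hxy hx
      simpa using this
    have h2 : y^2 ∈ LinearMap.ker φ := by
      have := sub_mem hxy2 hx
      simpa using this
    exact hgood y (LinearMap.mem_ker.mp h1) (LinearMap.mem_ker.mp h2)
end
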